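/- Let ℓ ≥ 1 be an integer, let B = {1,…,2ℓ} × {1,…,ℓ} ⊂ ℤ², and let σ : B → S¹ (unit vectors in ℝ²). Suppose (1/(2ℓ²)) Σ_{x∈B} σ_x·e₁ ≥ 1 − ξ with 0 ≤ ξ ≤ 1/100, and that the Dirichlet energy satisfies Σ_{{x,y}⊆B, x∼y} ‖σ_x − σ_y‖² ≤ K with K ≤ 1/3200. Then there exists a row index j ∈ {1,…,ℓ} such that σ_{(i,j)}·e₁ ≥ 9/10 for every i ∈ {1,…,2ℓ}. -/

import Mathlib

open Finset

/-- Nearest neighbours of a site of `ℤ²` (Euclidean distance 1). -/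
def nbrs (x : ℤ × ℤ) : Finset (ℤ × ℤ) :=
  {(x.1 + 1, x.2), (x.1 - 1, x.2), (x.1, x.2 + 1), (x.1, x.2 - 1)}

lemma tele (f : ℤ → ℝ) (a : ℤ) : ∀ b, a ≤ b → f b - f a = ∑ i ∈ Finset.Ico a b, (f (i+1) - f i) := by
  refine Int.le_induction ?_ ?_
  · simp
  · intro b hb ih
    have h : Finset.Ico a (b+1) = insert b (Finset.Ico a b) := by
      ext i; simp; omega
    rw [h, Finset.sum_insert (by simp)]
    linarith

lemma chain (f : ℤ → ℝ) (n a b : ℤ) (ha1 : 1 ≤ a) (ha2 : a ≤ n) (hb1 : 1 ≤ b) (hb2 : b ≤ n) :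
    |f b - f a| ≤ ∑ i ∈ Finset.Icc 1 (n-1), |f (i+1) - f i| := by
  have key : ∀ c d : ℤ, 1 ≤ c → c ≤ d → d ≤ n →
      |f d - f c| ≤ ∑ i ∈ Finset.Icc 1 (n-1), |f (i+1) - f i| := by
    intro c d hc hcd hdn
    rw [tele f c d hcd]
    calc |∑ i ∈ Finset.Ico c d, (f (i+1) - f i)|
        ≤ ∑ i ∈ Finset.Ico c d, |f (i+1) - f i| := Finset.abs_sum_le_sum_abs _ _
      _ ≤ ∑ i ∈ Finset.Icc 1 (n-1), |f (i+1) - f i| := by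
          apply Finset.sum_le_sum_of_subset_of_nonneg
          · intro i hi; simp only [Finset.mem_Ico, Finset.mem_Icc] at *; omega
          · intros; positivity
  rcases le_total a b with h | h
  · exact key a b ha1 h hb2
  · rw [abs_sub_comm]; exact key b a hb1 h ha2

lemma row_energy (f : ℤ → ℝ) (l : ℕ) (hl : 1 ≤ l) (a b : ℤ)
    (ha1 : 1 ≤ a) (ha2 : a ≤ 2*(l:ℤ)) (hb1 : 1 ≤ b) (hb2 : b ≤ 2*(l:ℤ))
    (hfa : 19/20 ≤ f a) (hfb : f b < 9/10) :
    1/(800*(l:ℝ)) ≤ ∑ i ∈ Finset.Icc (1:ℤ) (2*(l:ℤ)-1), (f (i+1) - f i)^2 := by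
  have hl1 : (1:ℝ) ≤ (l:ℝ) := by exact_mod_cast hl
  set s := Finset.Icc (1:ℤ) (2*(l:ℤ)-1) with hs
  have hcard : (s.card : ℝ) = 2*(l:ℝ) - 1 := by
    rw [hs, Int.card_Icc]
    have : (2*(l:ℤ) - 1 + 1 - 1).toNat = 2*l - 1 := by omega
    rw [this]
    push_cast [Nat.cast_sub (by omega : 1 ≤ 2*l)]
    ring
  have hchain := chain f (2*(l:ℤ)) a b ha1 ha2 hb1 hb2
  have h20 : (1:ℝ)/20 ≤ |f a - f b| := by
    rw [abs_of_nonneg (by linarith)]; linarith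
  have hCS := sq_sum_le_card_mul_sum_sq (s := s) (f := fun i => |f (i+1) - f i|)
  have habs : ∀ i ∈ s, |f (i+1) - f i|^2 = (f (i+1) - f i)^2 := by
    intro i _; exact sq_abs _
  rw [Finset.sum_congr rfl habs] at hCS
  have hb' : |f a - f b| ≤ ∑ i ∈ s, |f (i+1) - f i| := by
    rw [abs_sub_comm]; exact hchain
  have h1 : ((1:ℝ)/20)^2 ≤ (∑ i ∈ s, |f (i+1) - f i|)^2 := by
    apply sq_le_sq' <;> nlinarith [abs_nonneg (f a - f b)]
  have hsum_nonneg : (0:ℝ) ≤ ∑ i ∈ s, (f (i+1) - f i)^2 := by positivity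
  have : ((1:ℝ)/20)^2 ≤ (2*(l:ℝ)) * ∑ i ∈ s, (f (i+1) - f i)^2 := by
    calc ((1:ℝ)/20)^2 ≤ (s.card : ℝ) * ∑ i ∈ s, (f (i+1) - f i)^2 := le_trans h1 hCS
      _ ≤ (2*(l:ℝ)) * ∑ i ∈ s, (f (i+1) - f i)^2 := by
          apply mul_le_mul_of_nonneg_right _ hsum_nonneg; rw [hcard]; linarith
  rw [div_le_iff₀ (by positivity)]
  nlinarith

/-- In a `2ℓ × ℓ` rectangle of unit spins with average magnetization close to
`e₁` and small Dirichlet energy, there is a full row of spins pointwise well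
aligned with `e₁`. -/
theorem stmt4 (l : ℕ) (hl : 1 ≤ l) (σ : ℤ × ℤ → ℝ × ℝ) (ξ K : ℝ)
    (hunit : ∀ x ∈ Finset.Icc (1 : ℤ) (2 * l) ×ˢ Finset.Icc (1 : ℤ) l,
      (σ x).1 ^ 2 + (σ x).2 ^ 2 = 1)
    (hξ0 : 0 ≤ ξ) (hξ1 : ξ ≤ 1 / 100)
    (havg : 1 - ξ ≤ (1 / (2 * (l : ℝ) ^ 2)) *
      ∑ x ∈ Finset.Icc (1 : ℤ) (2 * l) ×ˢ Finset.Icc (1 : ℤ) l, (σ x).1)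
    (hK : K ≤ 1 / 3200)
    (hE : (1 / 2) * ∑ x ∈ Finset.Icc (1 : ℤ) (2 * l) ×ˢ Finset.Icc (1 : ℤ) l,
        ∑ y ∈ (Finset.Icc (1 : ℤ) (2 * l) ×ˢ Finset.Icc (1 : ℤ) l) ∩ nbrs x,
          (((σ x).1 - (σ y).1) ^ 2 + ((σ x).2 - (σ y).2) ^ 2) ≤ K) :
    ∃ j ∈ Finset.Icc (1 : ℤ) (l : ℤ),
      ∀ i ∈ Finset.Icc (1 : ℤ) (2 * l : ℤ), (9 : ℝ) / 10 ≤ (σ (i, j)).1 := by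
  by_contra hcon
  push_neg at hcon
  set B := Finset.Icc (1 : ℤ) (2 * l) ×ˢ Finset.Icc (1 : ℤ) l with hB
  have hl1 : (1:ℝ) ≤ (l:ℝ) := by exact_mod_cast hl
  have hmem : ∀ i j : ℤ, 1 ≤ i → i ≤ 2*(l:ℤ) → 1 ≤ j → j ≤ (l:ℤ) → ((i,j) ∈ B) := by
    intro i j h1 h2 h3 h4
    simp only [hB, Finset.mem_product, Finset.mem_Icc]
    exact ⟨⟨h1, h2⟩, ⟨h3, h4⟩⟩
  have hσle : ∀ x ∈ B, (σ x).1 ≤ 1 := by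
    intro x hx; nlinarith [hunit x hx, sq_nonneg (σ x).2, sq_nonneg ((σ x).1 - 1)]
  -- cardinality
  have hcard1 : (Finset.Icc (1:ℤ) (2*(l:ℤ))).card = 2*l := by
    rw [Int.card_Icc]; omega
  have hcard2 : (Finset.Icc (1:ℤ) ((l:ℤ))).card = l := by
    rw [Int.card_Icc]; omega
  have hcardB : (B.card : ℝ) = 2*(l:ℝ)^2 := by
    rw [hB, Finset.card_product, hcard1, hcard2]; push_cast; ring
  -- defect bound
  have hsum : 2*(l:ℝ)^2 * (1 - ξ) ≤ ∑ x ∈ B, (σ x).1 := by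
    have h2 : (0:ℝ) < 2*(l:ℝ)^2 := by positivity
    calc 2*(l:ℝ)^2 * (1 - ξ) ≤ 2*(l:ℝ)^2 * ((1 / (2 * (l : ℝ) ^ 2)) * ∑ x ∈ B, (σ x).1) :=
          mul_le_mul_of_nonneg_left havg (le_of_lt h2)
      _ = ∑ x ∈ B, (σ x).1 := by field_simp
  have hdefect : ∑ x ∈ B, (1 - (σ x).1) ≤ 2*(l:ℝ)^2 * ξ := by
    rw [Finset.sum_sub_distrib, Finset.sum_const, nsmul_eq_mul, hcardB]
    linarith
  -- bad rows
  haveI : DecidablePred (fun j : ℤ => ∀ i ∈ Finset.Icc (1:ℤ) (2*(l:ℤ)), (σ (i,j)).1 < 19/20) :=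
    fun _ => Classical.propDecidable _
  set R := (Finset.Icc (1:ℤ) (l:ℤ)).filter
    (fun j => ∀ i ∈ Finset.Icc (1:ℤ) (2*(l:ℤ)), (σ (i,j)).1 < 19/20) with hR
  have hdef_rows : ∑ x ∈ B, (1 - (σ x).1)
      = ∑ j ∈ Finset.Icc (1:ℤ) (l:ℤ), ∑ i ∈ Finset.Icc (1:ℤ) (2*(l:ℤ)), (1 - (σ (i,j)).1) := by
    rw [hB, Finset.sum_product]
    exact Finset.sum_comm
  have hRbound : (R.card : ℝ) * ((l:ℝ)/10) ≤ 2*(l:ℝ)^2 * ξ := by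
    have h1 : ∀ j ∈ R, (l:ℝ)/10 ≤ ∑ i ∈ Finset.Icc (1:ℤ) (2*(l:ℤ)), (1 - (σ (i,j)).1) := by
      intro j hj
      rw [hR, Finset.mem_filter] at hj
      obtain ⟨hj1, hj2⟩ := hj
      calc (l:ℝ)/10 = (2*l : ℕ) * (1/20 : ℝ) := by push_cast; ring
        _ = ∑ _i ∈ Finset.Icc (1:ℤ) (2*(l:ℤ)), (1/20 : ℝ) := by
            rw [Finset.sum_const, nsmul_eq_mul, hcard1]
        _ ≤ ∑ i ∈ Finset.Icc (1:ℤ) (2*(l:ℤ)), (1 - (σ (i,j)).1) := by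
            apply Finset.sum_le_sum
            intro i hi
            have := hj2 i hi
            linarith
    calc (R.card : ℝ) * ((l:ℝ)/10) = ∑ _j ∈ R, ((l:ℝ)/10) := by
          rw [Finset.sum_const, nsmul_eq_mul]
      _ ≤ ∑ j ∈ R, ∑ i ∈ Finset.Icc (1:ℤ) (2*(l:ℤ)), (1 - (σ (i,j)).1) :=
          Finset.sum_le_sum h1
      _ ≤ ∑ j ∈ Finset.Icc (1:ℤ) (l:ℤ), ∑ i ∈ Finset.Icc (1:ℤ) (2*(l:ℤ)), (1 - (σ (i,j)).1) := by
          apply Finset.sum_le_sum_of_subset_of_nonneg (Finset.filter_subset _ _)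
          intro j hj _
          apply Finset.sum_nonneg
          intro i hi
          simp only [Finset.mem_Icc] at hi hj
          have := hσle (i,j) (hmem i j hi.1 hi.2 hj.1 hj.2)
          linarith
      _ ≤ 2*(l:ℝ)^2 * ξ := by rw [← hdef_rows]; exact hdefect
  have hRcard : (R.card : ℝ) ≤ (l:ℝ)/5 := by
    have h10 : (0:ℝ) < (l:ℝ)/10 := by positivity
    have : (R.card : ℝ) ≤ 20*(l:ℝ)*ξ := by
      rw [← mul_le_mul_iff_left₀ h10]
      calc (R.card:ℝ) * ((l:ℝ)/10) ≤ 2*(l:ℝ)^2*ξ := hRbound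
        _ = 20*(l:ℝ)*ξ * ((l:ℝ)/10) := by ring
    nlinarith
  -- good rows
  set G := Finset.Icc (1:ℤ) (l:ℤ) \ R with hG
  have hGcard : (4/5 : ℝ)*(l:ℝ) ≤ (G.card : ℝ) := by
    have hsub : R ⊆ Finset.Icc (1:ℤ) (l:ℤ) := Finset.filter_subset _ _
    have : G.card = l - R.card := by rw [hG, Finset.card_sdiff_of_subset hsub, hcard2]
    have hRle : R.card ≤ l := by rw [← hcard2]; exact Finset.card_le_card hsub
    rw [this]
    push_cast [Nat.cast_sub hRle]
    linarith
  -- per-good-row energy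
  have hrow : ∀ j ∈ G, 1/(800*(l:ℝ)) ≤
      ∑ i ∈ Finset.Icc (1:ℤ) (2*(l:ℤ)-1), ((σ (i+1,j)).1 - (σ (i,j)).1)^2 := by
    intro j hj
    rw [hG, Finset.mem_sdiff, hR, Finset.mem_filter] at hj
    obtain ⟨hj1, hj2⟩ := hj
    push_neg at hj2
    obtain ⟨a, ha, hfa⟩ := hj2 hj1
    obtain ⟨b, hb, hfb⟩ := hcon j hj1
    simp only [Finset.mem_Icc] at ha hb
    have := row_energy (fun i => (σ (i,j)).1) l hl a b ha.1 ha.2 hb.1 hb.2 hfa hfb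
    exact this
  -- energy lower bound
  set g : ℤ × ℤ → ℤ × ℤ → ℝ :=
    fun x y => ((σ x).1 - (σ y).1) ^ 2 + ((σ x).2 - (σ y).2) ^ 2 with hg
  have hglow : ∀ i j : ℤ, 1 ≤ i → i ≤ 2*(l:ℤ)-1 → 1 ≤ j → j ≤ (l:ℤ) →
      ((σ (i+1,j)).1 - (σ (i,j)).1)^2 ≤ ∑ y ∈ B ∩ nbrs (i,j), g (i,j) y := by
    intro i j h1 h2 h3 h4
    have hmem' : ((i+1, j) : ℤ × ℤ) ∈ B ∩ nbrs (i,j) := by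
      rw [Finset.mem_inter]
      constructor
      · exact hmem (i+1) j (by omega) (by omega) h3 h4
      · simp [nbrs]
    calc ((σ (i+1,j)).1 - (σ (i,j)).1)^2 ≤ g (i,j) (i+1,j) := by
          have he : ((σ (i+1,j)).1 - (σ (i,j)).1)^2 = ((σ (i,j)).1 - (σ (i+1,j)).1)^2 := by ring
          simp only [hg]
          rw [he]
          linarith [sq_nonneg ((σ (i,j)).2 - (σ (i+1,j)).2)]
      _ ≤ ∑ y ∈ B ∩ nbrs (i,j), g (i,j) y := by
          apply Finset.single_le_sum _ hmem'
          intro y _; simp only [hg]; positivity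
  have hS : (1/1000 : ℝ) ≤ ∑ x ∈ B, ∑ y ∈ B ∩ nbrs x, g x y := by
    have hinner_nonneg : ∀ x : ℤ × ℤ, 0 ≤ ∑ y ∈ B ∩ nbrs x, g x y := by
      intro x; apply Finset.sum_nonneg; intro y _; simp only [hg]; positivity
    have e1 : ∑ x ∈ B, ∑ y ∈ B ∩ nbrs x, g x y
        = ∑ j ∈ Finset.Icc (1:ℤ) (l:ℤ), ∑ i ∈ Finset.Icc (1:ℤ) (2*(l:ℤ)),
            ∑ y ∈ B ∩ nbrs (i,j), g (i,j) y := by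
      rw [hB, Finset.sum_product]; exact Finset.sum_comm
    rw [e1]
    calc (1/1000 : ℝ) = (4/5)*(l:ℝ) * (1/(800*(l:ℝ))) := by
          field_simp; ring
      _ ≤ (G.card : ℝ) * (1/(800*(l:ℝ))) :=
          mul_le_mul_of_nonneg_right hGcard (by positivity)
      _ = ∑ _j ∈ G, (1/(800*(l:ℝ))) := by rw [Finset.sum_const, nsmul_eq_mul]
      _ ≤ ∑ j ∈ G, ∑ i ∈ Finset.Icc (1:ℤ) (2*(l:ℤ)), ∑ y ∈ B ∩ nbrs (i,j), g (i,j) y := by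
          apply Finset.sum_le_sum
          intro j hj
          have hj1 : j ∈ Finset.Icc (1:ℤ) (l:ℤ) := (Finset.mem_sdiff.mp hj).1
          simp only [Finset.mem_Icc] at hj1
          calc (1/(800*(l:ℝ)))
              ≤ ∑ i ∈ Finset.Icc (1:ℤ) (2*(l:ℤ)-1), ((σ (i+1,j)).1 - (σ (i,j)).1)^2 := hrow j hj
            _ ≤ ∑ i ∈ Finset.Icc (1:ℤ) (2*(l:ℤ)-1), ∑ y ∈ B ∩ nbrs (i,j), g (i,j) y := by
                apply Finset.sum_le_sum
                intro i hi
                simp only [Finset.mem_Icc] at hi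
                exact hglow i j hi.1 hi.2 hj1.1 hj1.2
            _ ≤ ∑ i ∈ Finset.Icc (1:ℤ) (2*(l:ℤ)), ∑ y ∈ B ∩ nbrs (i,j), g (i,j) y := by
                apply Finset.sum_le_sum_of_subset_of_nonneg
                · intro i hi; simp only [Finset.mem_Icc] at *; omega
                · intro i _ _; exact hinner_nonneg (i,j)
      _ ≤ ∑ j ∈ Finset.Icc (1:ℤ) (l:ℤ), ∑ i ∈ Finset.Icc (1:ℤ) (2*(l:ℤ)),
            ∑ y ∈ B ∩ nbrs (i,j), g (i,j) y := by
          apply Finset.sum_le_sum_of_subset_of_nonneg (Finset.sdiff_subset)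
          intro j _ _
          apply Finset.sum_nonneg
          intro i _; exact hinner_nonneg (i,j)
  have : (1/2 : ℝ) * (1/1000) ≤ K := le_trans (by linarith) hE
  linarith
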